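/- arXiv:1502.00696 — 2 statements merged into one kernel-verified Lean document; each statement's English description precedes it below -/
import Mathlib

section
/- Let α ∈ (0,1), 0 < h₁ < h₂, Δ = h₂ − h₁, and let ζ : (1, 1/α) → (0, ∞) be a function bounded away from zero. Define ψ_α(p) = (1 − α p)^{−1/p} and θ(p) = ψ_α(p) · ζ(p) for p ∈ (1, 1/α), and let φ(x) = 1_{(h₁,∞)}(x)(x − h₁)^{−α} − 1_{(h₂,∞)}(x)(x − h₂)^{−α}, so that φ = Γ(1−α) · D^α[1_{(h₁,h₂)}]. Then the Grand Lebesgue norm satisfies sup_{p ∈ (1, 1/α)} [ ‖φ‖_{L^p(0,∞)} / θ(p) ] ≤ 3 · Δ^{−α} · sup_{p ∈ (1, 1/α)} [ Δ^{1/p} / ζ(p) ]. -/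
open MeasureTheory Real Set ENNReal

/-- `Γ(1-α)` times the Riemann–Liouville fractional derivative of the indicator
`1_{(h₁,h₂)}`: `φ(x) = 1_{(h₁,∞)}(x)(x-h₁)^{-α} - 1_{(h₂,∞)}(x)(x-h₂)^{-α}`. -/
noncomputable def fracDerivIndicator (α h₁ h₂ : ℝ) (x : ℝ) : ℝ :=
  Set.indicator (Set.Ioi h₁) (fun y => (y - h₁) ^ (-α)) x -
    Set.indicator (Set.Ioi h₂) (fun y => (y - h₂) ^ (-α)) x

private lemma aux_mvt {α a b : ℝ} (hα : 0 < α) (ha : 0 < a) (hab : a < b) :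
    a ^ (-α) - b ^ (-α) ≤ α * (b - a) * a ^ (-α - 1) := by
  obtain ⟨c, hc, hder⟩ := exists_hasDerivAt_eq_slope (fun t => t ^ (-α))
    (fun t => -α * t ^ (-α - 1)) hab
    (fun x hx => (Real.continuousAt_rpow_const x (-α)
      (Or.inl (ha.trans_le hx.1).ne')).continuousWithinAt)
    (fun x hx => by
      simpa using Real.hasDerivAt_rpow_const (x := x) (p := -α)
        (Or.inl (ha.trans hx.1).ne'))
  have hba : (0:ℝ) < b - a := sub_pos.mpr hab
  rw [eq_div_iff hba.ne'] at hder
  have h2 : c ^ (-α - 1) ≤ a ^ (-α - 1) :=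
    Real.rpow_le_rpow_of_nonpos ha hc.1.le (by linarith)
  have h1 : a ^ (-α) - b ^ (-α) = α * c ^ (-α - 1) * (b - a) := by linear_combination hder
  rw [h1]
  have : 0 ≤ α * (b - a) := by positivity
  nlinarith

private lemma aux_Jfin {s Δ : ℝ} (hs : s < 1) (hΔ : 0 < Δ) (c : ℝ) :
    IntegrableOn (fun x => (x - c) ^ (-s)) (Ioc c (c + Δ)) ∧
      ∫ x in Ioc c (c + Δ), (x - c) ^ (-s) = Δ ^ (1 - s) / (1 - s) := by
  have hr : (-1 : ℝ) < -s := by linarith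
  have hii : IntervalIntegrable (fun x => (x - c) ^ (-s)) volume c (c + Δ) := by
    have := (intervalIntegral.intervalIntegrable_rpow' (a := 0) (b := Δ) hr).comp_sub_right c
    simpa [zero_add, add_comm Δ c] using this
  constructor
  · exact (intervalIntegrable_iff_integrableOn_Ioc_of_le (by linarith)).mp hii
  · rw [← intervalIntegral.integral_of_le (by linarith : c ≤ c + Δ),
      intervalIntegral.integral_comp_sub_right (fun x => x ^ (-s)) c]
    simp only [sub_self, add_sub_cancel_left]
    rw [integral_rpow (Or.inl hr), Real.zero_rpow (by linarith : -s + 1 ≠ 0),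
      show -s + 1 = 1 - s by ring]
    ring

private lemma aux_Jinf {a Δ : ℝ} (ha : a < -1) (hΔ : 0 < Δ) (c : ℝ) :
    IntegrableOn (fun x => (x - c) ^ a) (Ioi (c + Δ)) ∧
      ∫ x in Ioi (c + Δ), (x - c) ^ a = Δ ^ (a + 1) / (-(a + 1)) := by
  have hmem : ∀ x : ℝ, x ∈ Ioi (c + Δ) ↔ x - c ∈ Ioi Δ := by
    intro x; simp only [mem_Ioi]; constructor <;> intro h <;> linarith
  have heq : (Ioi (c + Δ)).indicator (fun x => (x - c) ^ a) =
      fun x => (Ioi Δ).indicator (fun y => y ^ a) (x - c) := by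
    funext x
    by_cases h : x ∈ Ioi (c + Δ)
    · rw [Set.indicator_of_mem h, Set.indicator_of_mem ((hmem x).mp h)]
    · rw [Set.indicator_of_notMem h,
        Set.indicator_of_notMem (fun hh => h ((hmem x).mpr hh))]
  have hint : Integrable ((Ioi (c + Δ)).indicator fun x => (x - c) ^ a) volume := by
    rw [heq]
    exact ((integrable_indicator_iff measurableSet_Ioi).mpr
      (integrableOn_Ioi_rpow_of_lt ha hΔ)).comp_sub_right c
  refine ⟨(integrable_indicator_iff measurableSet_Ioi).mp hint, ?_⟩
  rw [← integral_indicator measurableSet_Ioi, heq,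
    integral_sub_right_eq_self ((Ioi Δ).indicator fun y => y ^ a) c,
    integral_indicator measurableSet_Ioi, integral_Ioi_rpow_of_lt ha hΔ, div_neg, neg_div]


private lemma aux_pointwise {α h₁ h₂ p : ℝ} (hα0 : 0 < α) (h12 : h₁ < h₂)
    (hp1 : 1 ≤ p) (x : ℝ) :
    |fracDerivIndicator α h₁ h₂ x| ^ p ≤
      (Ioc h₁ h₂).indicator (fun y => (y - h₁) ^ (-(α * p))) x +
      ((Ioc h₂ (h₂ + (h₂ - h₁))).indicator (fun y => (y - h₂) ^ (-(α * p))) x +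
      (Ioi (h₂ + (h₂ - h₁))).indicator
        (fun y => (α * (h₂ - h₁)) ^ p * (y - h₂) ^ ((-α - 1) * p)) x) := by
  have hp0 : 0 < p := lt_of_lt_of_le one_pos hp1
  have hΔ : 0 < h₂ - h₁ := sub_pos.mpr h12
  have hn1 : ∀ z, 0 ≤ (Ioc h₁ h₂).indicator (fun y => (y - h₁) ^ (-(α * p))) z :=
    fun z => Set.indicator_nonneg
      (fun y hy => Real.rpow_nonneg (by linarith [hy.1] : 0 ≤ y - h₁) _) z
  have hn2 : ∀ z, 0 ≤ (Ioc h₂ (h₂ + (h₂ - h₁))).indicator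
      (fun y => (y - h₂) ^ (-(α * p))) z :=
    fun z => Set.indicator_nonneg
      (fun y hy => Real.rpow_nonneg (by linarith [hy.1] : 0 ≤ y - h₂) _) z
  have hn3 : ∀ z, 0 ≤ (Ioi (h₂ + (h₂ - h₁))).indicator
      (fun y => (α * (h₂ - h₁)) ^ p * (y - h₂) ^ ((-α - 1) * p)) z :=
    fun z => Set.indicator_nonneg (fun y hy => mul_nonneg
      (Real.rpow_nonneg (by positivity) _)
      (Real.rpow_nonneg (by simp only [mem_Ioi] at hy; linarith : 0 ≤ y - h₂) _)) z
  rcases le_or_gt x h₁ with hx1 | hx1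
  · -- x ≤ h₁ : φ x = 0
    have : fracDerivIndicator α h₁ h₂ x = 0 := by
      rw [fracDerivIndicator, Set.indicator_of_notMem (by simp [mem_Ioi]; linarith),
        Set.indicator_of_notMem (by simp [mem_Ioi]; linarith), sub_zero]
    rw [this, abs_zero, Real.zero_rpow hp0.ne']
    have := hn1 x; have := hn2 x; have := hn3 x; linarith
  rcases le_or_gt x h₂ with hx2 | hx2
  · -- h₁ < x ≤ h₂
    have hφ : fracDerivIndicator α h₁ h₂ x = (x - h₁) ^ (-α) := by
      rw [fracDerivIndicator, Set.indicator_of_mem (mem_Ioi.mpr hx1),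
        Set.indicator_of_notMem (by simp [mem_Ioi]; linarith), sub_zero]
    have hxh : 0 < x - h₁ := sub_pos.mpr hx1
    have hval : ((x - h₁) ^ (-α)) ^ p = (x - h₁) ^ (-(α * p)) := by
      rw [← Real.rpow_mul hxh.le]; ring_nf
    rw [hφ, abs_of_nonneg (Real.rpow_nonneg hxh.le _), hval,
      Set.indicator_of_mem (show x ∈ Ioc h₁ h₂ from ⟨hx1, hx2⟩)]
    have := hn2 x; have := hn3 x; linarith
  rcases le_or_gt x (h₂ + (h₂ - h₁)) with hx3 | hx3
  · -- h₂ < x ≤ h₂ + Δ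
    have hφ : fracDerivIndicator α h₁ h₂ x = (x - h₁) ^ (-α) - (x - h₂) ^ (-α) := by
      rw [fracDerivIndicator, Set.indicator_of_mem (mem_Ioi.mpr (by linarith)),
        Set.indicator_of_mem (mem_Ioi.mpr hx2)]
    have hb : 0 < x - h₂ := sub_pos.mpr hx2
    have hmono : (x - h₁) ^ (-α) ≤ (x - h₂) ^ (-α) :=
      Real.rpow_le_rpow_of_nonpos hb (by linarith) (by linarith)
    have habs : |fracDerivIndicator α h₁ h₂ x| ≤ (x - h₂) ^ (-α) := by
      rw [hφ, abs_sub_comm, abs_of_nonneg (by linarith)]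
      have : 0 ≤ (x - h₁) ^ (-α) := Real.rpow_nonneg (by linarith) _
      linarith
    have key : |fracDerivIndicator α h₁ h₂ x| ^ p ≤ (x - h₂) ^ (-(α * p)) := by
      calc |fracDerivIndicator α h₁ h₂ x| ^ p ≤ ((x - h₂) ^ (-α)) ^ p :=
            Real.rpow_le_rpow (abs_nonneg _) habs hp0.le
        _ = (x - h₂) ^ (-(α * p)) := by
            rw [← Real.rpow_mul hb.le]; ring_nf
    rw [Set.indicator_of_mem (show x ∈ Ioc h₂ (h₂ + (h₂ - h₁)) from ⟨hx2, hx3⟩)]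
    have := hn1 x; have := hn3 x; linarith
  · -- x > h₂ + Δ
    have hφ : fracDerivIndicator α h₁ h₂ x = (x - h₁) ^ (-α) - (x - h₂) ^ (-α) := by
      rw [fracDerivIndicator, Set.indicator_of_mem (mem_Ioi.mpr (by linarith)),
        Set.indicator_of_mem (mem_Ioi.mpr (by linarith))]
    have hb : 0 < x - h₂ := by linarith
    have hmvt : (x - h₂) ^ (-α) - (x - h₁) ^ (-α) ≤
        α * (h₂ - h₁) * (x - h₂) ^ (-α - 1) := by
      have := aux_mvt (a := x - h₂) (b := x - h₁) hα0 hb (by linarith)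
      have he : x - h₁ - (x - h₂) = h₂ - h₁ := by ring
      rw [he] at this; exact this
    have hmono : (x - h₁) ^ (-α) ≤ (x - h₂) ^ (-α) :=
      Real.rpow_le_rpow_of_nonpos hb (by linarith) (by linarith)
    have habs : |fracDerivIndicator α h₁ h₂ x| ≤ α * (h₂ - h₁) * (x - h₂) ^ (-α - 1) := by
      rw [hφ, abs_sub_comm, abs_of_nonneg (by linarith)]
      linarith
    have key : |fracDerivIndicator α h₁ h₂ x| ^ p ≤
        (α * (h₂ - h₁)) ^ p * (x - h₂) ^ ((-α - 1) * p) := by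
      calc |fracDerivIndicator α h₁ h₂ x| ^ p
          ≤ (α * (h₂ - h₁) * (x - h₂) ^ (-α - 1)) ^ p :=
            Real.rpow_le_rpow (abs_nonneg _) habs hp0.le
        _ = (α * (h₂ - h₁)) ^ p * (x - h₂) ^ ((-α - 1) * p) := by
            rw [Real.mul_rpow (by positivity) (Real.rpow_nonneg hb.le _),
              ← Real.rpow_mul hb.le]
    rw [Set.indicator_of_mem (mem_Ioi.mpr hx3)]
    have := hn1 x; have := hn2 x; linarith

private lemma aux_norm_bound {α h₁ h₂ p : ℝ} (hα0 : 0 < α) (hα1 : α < 1) (h1 : 0 < h₁)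
    (h12 : h₁ < h₂) (hp1 : 1 < p) (hpα : p < 1 / α) :
    eLpNorm (fracDerivIndicator α h₁ h₂) (ENNReal.ofReal p)
        (volume.restrict (Ioi (0 : ℝ))) ≤
      ENNReal.ofReal ((3 * (h₂ - h₁) ^ (1 - α * p) / (1 - α * p)) ^ (1 / p)) := by
  have hp0 : 0 < p := lt_trans one_pos hp1
  have hΔ : 0 < h₂ - h₁ := sub_pos.mpr h12
  have hs : α * p < 1 := by
    rw [lt_div_iff₀ hα0] at hpα; linarith
  have h1s : 0 < 1 - α * p := by linarith
  set Δ := h₂ - h₁ with hΔdef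
  have ha : (-α - 1) * p < -1 := by nlinarith
  -- the three pieces
  have hJ1 := aux_Jfin (s := α * p) hs hΔ h₁
  have hJ2 := aux_Jfin (s := α * p) hs hΔ h₂
  have hJ3 := aux_Jinf (a := (-α - 1) * p) ha hΔ h₂
  have he1 : h₁ + Δ = h₂ := by rw [hΔdef]; ring
  rw [he1] at hJ1
  set g₁ := (Ioc h₁ h₂).indicator (fun y => (y - h₁) ^ (-(α * p))) with hg1def
  set g₂ := (Ioc h₂ (h₂ + Δ)).indicator (fun y => (y - h₂) ^ (-(α * p))) with hg2def
  set g₃ := (Ioi (h₂ + Δ)).indicator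
      (fun y => (α * Δ) ^ p * (y - h₂) ^ ((-α - 1) * p)) with hg3def
  have hint1 : Integrable g₁ volume :=
    (integrable_indicator_iff measurableSet_Ioc).mpr hJ1.1
  have hint2 : Integrable g₂ volume :=
    (integrable_indicator_iff measurableSet_Ioc).mpr hJ2.1
  have hint3 : Integrable g₃ volume :=
    (integrable_indicator_iff measurableSet_Ioi).mpr (hJ3.1.const_mul _)
  have hnn : ∀ x, 0 ≤ g₁ x + (g₂ x + g₃ x) := by
    intro x
    have h1' : 0 ≤ g₁ x := Set.indicator_nonneg
      (fun y hy => Real.rpow_nonneg (by linarith [hy.1] : 0 ≤ y - h₁) _) x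
    have h2' : 0 ≤ g₂ x := Set.indicator_nonneg
      (fun y hy => Real.rpow_nonneg (by linarith [hy.1] : 0 ≤ y - h₂) _) x
    have h3' : 0 ≤ g₃ x := Set.indicator_nonneg (fun y hy => mul_nonneg
      (Real.rpow_nonneg (by positivity) _)
      (Real.rpow_nonneg (by simp only [mem_Ioi] at hy; linarith : 0 ≤ y - h₂) _)) x
    linarith
  -- value of the integral of g
  have hI3 : ∫ x, g₃ x = (α * Δ) ^ p * (Δ ^ ((-α - 1) * p + 1) / (-((-α - 1) * p + 1))) := by
    rw [hg3def, integral_indicator measurableSet_Ioi, integral_const_mul, hJ3.2]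
  have hI3le : ∫ x, g₃ x ≤ Δ ^ (1 - α * p) / (1 - α * p) := by
    rw [hI3]
    have hq : 0 < -((-α - 1) * p + 1) := by linarith
    have hαq : α ≤ -((-α - 1) * p + 1) := by nlinarith
    have hαp : α ^ p ≤ α := by
      have := Real.rpow_le_rpow_of_exponent_ge hα0 hα1.le hp1.le
      rwa [Real.rpow_one] at this
    have hsplit : (α * Δ) ^ p * Δ ^ ((-α - 1) * p + 1) = α ^ p * Δ ^ (1 - α * p) := by
      rw [Real.mul_rpow hα0.le hΔ.le, mul_assoc,
        ← Real.rpow_add hΔ, show p + ((-α - 1) * p + 1) = 1 - α * p by ring]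
    have hDX : 0 < Δ ^ (1 - α * p) := Real.rpow_pos_of_pos hΔ _
    rw [mul_div_assoc'] at *
    calc (α * Δ) ^ p * Δ ^ ((-α - 1) * p + 1) / -((-α - 1) * p + 1)
        = α ^ p * Δ ^ (1 - α * p) / -((-α - 1) * p + 1) := by rw [hsplit]
      _ ≤ Δ ^ (1 - α * p) := by
          rw [div_le_iff₀ hq]
          have hα' : α ^ p ≤ 1 := by nlinarith
          nlinarith [Real.rpow_nonneg (le_of_lt hα0) p]
      _ ≤ Δ ^ (1 - α * p) / (1 - α * p) := by
          rw [le_div_iff₀ h1s]; nlinarith [mul_pos hDX (mul_pos hα0 hp0)]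
  have hIval : ∫ x, (g₁ x + (g₂ x + g₃ x)) ≤ 3 * Δ ^ (1 - α * p) / (1 - α * p) := by
    have hint23 : Integrable (fun x => g₂ x + g₃ x) volume := hint2.add hint3
    rw [integral_add hint1 hint23, integral_add hint2 hint3]
    have e1 : ∫ x, g₁ x = Δ ^ (1 - α * p) / (1 - α * p) := by
      rw [hg1def, integral_indicator measurableSet_Ioc, hJ1.2]
    have e2 : ∫ x, g₂ x = Δ ^ (1 - α * p) / (1 - α * p) := by
      rw [hg2def, integral_indicator measurableSet_Ioc, hJ2.2]
    rw [e1, e2, mul_div_assoc]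
    linarith
  -- lintegral bound
  have key : (∫⁻ x in Ioi (0:ℝ), (‖fracDerivIndicator α h₁ h₂ x‖₊ : ℝ≥0∞) ^ p) ≤
      ENNReal.ofReal (3 * Δ ^ (1 - α * p) / (1 - α * p)) := by
    calc (∫⁻ x in Ioi (0:ℝ), (‖fracDerivIndicator α h₁ h₂ x‖₊ : ℝ≥0∞) ^ p)
        ≤ ∫⁻ x, (‖fracDerivIndicator α h₁ h₂ x‖₊ : ℝ≥0∞) ^ p :=
          setLIntegral_le_lintegral _ _
      _ ≤ ∫⁻ x, ENNReal.ofReal (g₁ x + (g₂ x + g₃ x)) := by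
          refine lintegral_mono fun x => ?_
          rw [← enorm_eq_nnnorm, ← ofReal_norm, Real.norm_eq_abs,
            ENNReal.ofReal_rpow_of_nonneg (abs_nonneg _) hp0.le]
          exact ENNReal.ofReal_le_ofReal (aux_pointwise hα0 h12 hp1.le x)
      _ = ENNReal.ofReal (∫ x, (g₁ x + (g₂ x + g₃ x))) :=
          (MeasureTheory.ofReal_integral_eq_lintegral_ofReal
            (hint1.add (hint2.add hint3)) (Filter.Eventually.of_forall hnn)).symm
      _ ≤ ENNReal.ofReal (3 * Δ ^ (1 - α * p) / (1 - α * p)) :=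
          ENNReal.ofReal_le_ofReal hIval
  rw [eLpNorm_eq_lintegral_rpow_enorm_toReal (ENNReal.ofReal_pos.mpr hp0).ne'
    ENNReal.ofReal_ne_top, ENNReal.toReal_ofReal hp0.le]
  calc (∫⁻ x in Ioi (0:ℝ), (‖fracDerivIndicator α h₁ h₂ x‖₊ : ℝ≥0∞) ^ p) ^ (1 / p)
      ≤ (ENNReal.ofReal (3 * Δ ^ (1 - α * p) / (1 - α * p))) ^ (1 / p) :=
        ENNReal.rpow_le_rpow key (by positivity)
    _ = ENNReal.ofReal ((3 * Δ ^ (1 - α * p) / (1 - α * p)) ^ (1 / p)) := by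
        rw [ENNReal.ofReal_rpow_of_nonneg (by positivity) (by positivity)]

/-- Grand Lebesgue norm estimate for the fractional derivative of an indicator:
with `θ(p) = (1-αp)^{-1/p} ζ(p)`,
`‖φ‖Gθ = sup_p ‖φ‖_p/θ(p) ≤ 3 Δ^{-α} sup_p Δ^{1/p}/ζ(p) = 3 Δ^{-α} φ(Gζ, Δ)`. -/
theorem stmt_9 (α h₁ h₂ : ℝ) (hα : α ∈ Set.Ioo (0 : ℝ) 1) (h1 : 0 < h₁) (h12 : h₁ < h₂)
    (ζ : ℝ → ℝ) (hζpos : ∀ p ∈ Set.Ioo (1 : ℝ) (1 / α), 0 < ζ p)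
    (hζ : ∃ ε : ℝ, 0 < ε ∧ ∀ p ∈ Set.Ioo (1 : ℝ) (1 / α), ε ≤ ζ p) :
    (⨆ p ∈ Set.Ioo (1 : ℝ) (1 / α),
        eLpNorm (fracDerivIndicator α h₁ h₂) (ENNReal.ofReal p)
            (volume.restrict (Set.Ioi (0 : ℝ))) /
          ENNReal.ofReal ((1 - α * p) ^ (-(1 / p)) * ζ p)) ≤
      ENNReal.ofReal (3 * (h₂ - h₁) ^ (-α)) *
        ⨆ p ∈ Set.Ioo (1 : ℝ) (1 / α), ENNReal.ofReal ((h₂ - h₁) ^ (1 / p) / ζ p) := by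
  obtain ⟨hα0, hα1⟩ := hα
  refine iSup₂_le fun p hp => ?_
  obtain ⟨hp1, hpα⟩ := hp
  have hp0 : 0 < p := lt_trans one_pos hp1
  have hΔ : 0 < h₂ - h₁ := sub_pos.mpr h12
  have hs : α * p < 1 := by rw [lt_div_iff₀ hα0] at hpα; linarith
  have h1s : 0 < 1 - α * p := by linarith
  have hζp : 0 < ζ p := hζpos p ⟨hp1, hpα⟩
  have hθ : 0 < (1 - α * p) ^ (-(1 / p)) * ζ p :=
    mul_pos (Real.rpow_pos_of_pos h1s _) hζp
  rw [ENNReal.div_le_iff (ENNReal.ofReal_pos.mpr hθ).ne' ENNReal.ofReal_ne_top]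
  have h3p : (3 : ℝ) ^ (1 / p) ≤ 3 := by
    have h1p : 1 / p ≤ 1 := by rw [div_le_one hp0]; linarith
    calc (3 : ℝ) ^ (1 / p) ≤ 3 ^ (1 : ℝ) :=
          Real.rpow_le_rpow_of_exponent_le (by norm_num) h1p
      _ = 3 := Real.rpow_one 3
  have hreal : (3 * (h₂ - h₁) ^ (1 - α * p) / (1 - α * p)) ^ (1 / p) ≤
      3 * (h₂ - h₁) ^ (-α) * ((h₂ - h₁) ^ (1 / p) / ζ p) *
        ((1 - α * p) ^ (-(1 / p)) * ζ p) := by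
    have hR : 3 * (h₂ - h₁) ^ (-α) * ((h₂ - h₁) ^ (1 / p) / ζ p) *
        ((1 - α * p) ^ (-(1 / p)) * ζ p)
        = 3 * ((h₂ - h₁) ^ (-α) * (h₂ - h₁) ^ (1 / p)) * (1 - α * p) ^ (-(1 / p)) := by
      field_simp
    have hL : (3 * (h₂ - h₁) ^ (1 - α * p) / (1 - α * p)) ^ (1 / p)
        = 3 ^ (1 / p) * ((h₂ - h₁) ^ (-α) * (h₂ - h₁) ^ (1 / p)) *
          (1 - α * p) ^ (-(1 / p)) := by
      rw [div_eq_mul_inv, Real.mul_rpow (by positivity) (by positivity),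
        Real.mul_rpow (by norm_num : (0:ℝ) ≤ 3) (Real.rpow_nonneg hΔ.le _),
        ← Real.rpow_mul hΔ.le,
        show (1 - α * p) * (1 / p) = -α + 1 / p by field_simp; ring,
        Real.rpow_add hΔ, Real.inv_rpow h1s.le, ← Real.rpow_neg h1s.le]
    rw [hL, hR]
    have hM : 0 ≤ (h₂ - h₁) ^ (-α) * (h₂ - h₁) ^ (1 / p) :=
      mul_nonneg (Real.rpow_nonneg hΔ.le _) (Real.rpow_nonneg hΔ.le _)
    have hN : 0 ≤ (1 - α * p) ^ (-(1 / p)) := Real.rpow_nonneg h1s.le _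
    exact mul_le_mul_of_nonneg_right (mul_le_mul_of_nonneg_right h3p hM) hN
  calc eLpNorm (fracDerivIndicator α h₁ h₂) (ENNReal.ofReal p)
        (volume.restrict (Set.Ioi (0 : ℝ)))
      ≤ ENNReal.ofReal ((3 * (h₂ - h₁) ^ (1 - α * p) / (1 - α * p)) ^ (1 / p)) :=
        aux_norm_bound hα0 hα1 h1 h12 hp1 hpα
    _ ≤ ENNReal.ofReal (3 * (h₂ - h₁) ^ (-α) * ((h₂ - h₁) ^ (1 / p) / ζ p) *
          ((1 - α * p) ^ (-(1 / p)) * ζ p)) := ENNReal.ofReal_le_ofReal hreal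
    _ = ENNReal.ofReal (3 * (h₂ - h₁) ^ (-α)) *
          ENNReal.ofReal ((h₂ - h₁) ^ (1 / p) / ζ p) *
          ENNReal.ofReal ((1 - α * p) ^ (-(1 / p)) * ζ p) := by
        rw [ENNReal.ofReal_mul (mul_nonneg (mul_nonneg (by norm_num)
            (Real.rpow_nonneg hΔ.le _)) (div_nonneg (Real.rpow_nonneg hΔ.le _) hζp.le)),
          ENNReal.ofReal_mul (mul_nonneg (by norm_num) (Real.rpow_nonneg hΔ.le _))]
    _ ≤ (ENNReal.ofReal (3 * (h₂ - h₁) ^ (-α)) *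
          ⨆ q ∈ Set.Ioo (1 : ℝ) (1 / α), ENNReal.ofReal ((h₂ - h₁) ^ (1 / q) / ζ q)) *
          ENNReal.ofReal ((1 - α * p) ^ (-(1 / p)) * ζ p) := by
        gcongr
        exact le_iSup₂ (f := fun q (_ : q ∈ Set.Ioo (1 : ℝ) (1 / α)) =>
          ENNReal.ofReal ((h₂ - h₁) ^ (1 / q) / ζ q)) p ⟨hp1, hpα⟩
end

section
/- Let α ∈ (0,1), 0 < b ≤ ∞, 1 < β ≤ 1/α, and let f : (0,b) → ℝ be measurable (extended by zero) such that ψ(p) := ‖f‖_{B^{(α)}_p} < ∞ for every p ∈ (1, β). Then sup_{p ∈ (1, β)} [ ‖D^α[f]‖_{L^p(0,b)} / ψ(p) ] ≤ 1/Γ(1−α), where D^α is the Marchaud fractional derivative of order α; that is, the Grand Lebesgue norm of D^α[f] generated by the Besov natural function ψ is at most 1/Γ(1−α). -/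
open MeasureTheory Real Set ENNReal

/-- The Marchaud fractional derivative
`D^α[f](x) = (1/Γ(1-α)) [x^{-α} f(x) + α ∫_0^x (f(x)-f(t))(x-t)^{-1-α} dt]`. -/
noncomputable def marchaud (α : ℝ) (f : ℝ → ℝ) (x : ℝ) : ℝ :=
  (1 / Real.Gamma (1 - α)) *
    (x ^ (-α) * f x + α * ∫ t in (0 : ℝ)..x, (f x - f t) * (x - t) ^ (-1 - α))

/-- The `L^p` modulus of continuity `ω_p(f,δ) = sup_{|h| ≤ δ} ‖f(·+h) - f(·)‖_{L^p(ℝ)}`. -/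
noncomputable def modulusLp (p : ℝ≥0∞) (f : ℝ → ℝ) (δ : ℝ) : ℝ≥0∞ :=
  ⨆ h ∈ Set.Icc (-δ) δ, eLpNorm (fun x => f (x + h) - f x) p volume

/-- The interval `(0,b)` for `b : ℝ≥0∞` (allowing `b = ∞`), as a subset of `ℝ`. -/
def intervalOf (b : ℝ≥0∞) : Set ℝ := {x : ℝ | 0 < x ∧ ENNReal.ofReal x < b}

/-- The modified Besov norm
`‖f‖_{B^α_p} = ‖x^{-α} f(x)‖_{L^p(0,b)} + α ∫_0^b t^{-1-α} ω_p(f,t) dt`. -/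
noncomputable def besovNorm (α p : ℝ) (b : ℝ≥0∞) (f : ℝ → ℝ) : ℝ≥0∞ :=
  eLpNorm (fun x => x ^ (-α) * f x) (ENNReal.ofReal p) (volume.restrict (intervalOf b)) +
    ENNReal.ofReal α *
      ∫⁻ t in intervalOf b, ENNReal.ofReal (t ^ (-1 - α)) * modulusLp (ENNReal.ofReal p) f t

private lemma iSup_rpow' {ι : Sort*} {y : ℝ} (hy : 0 < y) (f : ι → ℝ≥0∞) :
    (⨆ i, f i) ^ y = ⨆ i, f i ^ y := by
  exact OrderIso.map_iSup (ENNReal.orderIsoRpow y hy) f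

theorem minkowski_lintegral {X Y : Type*} [MeasurableSpace X] [MeasurableSpace Y]
    {μ : Measure X} {ν : Measure Y} [SigmaFinite μ] [SFinite ν]
    {p q : ℝ} (hpq : p.HolderConjugate q)
    {F : X → Y → ℝ≥0∞} (hF : Measurable (Function.uncurry F)) :
    (∫⁻ x, (∫⁻ y, F x y ∂ν) ^ p ∂μ) ^ (1 / p) ≤
      ∫⁻ y, (∫⁻ x, F x y ^ p ∂μ) ^ (1 / p) ∂ν := by
  have hp1 : 1 < p := hpq.lt
  have hp0 : 0 < p := hpq.pos
  set H : X → ℝ≥0∞ := fun x => ∫⁻ y, F x y ∂ν with hHdef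
  have hH : Measurable H := hF.lintegral_prod_right
  set R : ℝ≥0∞ := ∫⁻ y, (∫⁻ x, F x y ^ p ∂μ) ^ (1 / p) ∂ν with hRdef
  set G : ℕ → X → ℝ≥0∞ := fun n x => (spanningSets μ n).indicator (fun x => min (H x) n) x
    with hGdef
  have hGmeas : ∀ n, Measurable (G n) := fun n =>
    (hH.min measurable_const).indicator (measurableSet_spanningSets μ n)
  have hGle : ∀ n x, G n x ≤ H x := by
    intro n x
    by_cases hx : x ∈ spanningSets μ n
    · simp [hGdef, hx, min_le_left]
    · simp [hGdef, hx]
  have hGlen : ∀ n x, G n x ≤ (n : ℝ≥0∞) := by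
    intro n x
    by_cases hx : x ∈ spanningSets μ n
    · simp [hGdef, hx, min_le_right]
    · simp [hGdef, hx]
  have hGne : ∀ n x, G n x ≠ ⊤ := fun n x =>
    ((hGlen n x).trans_lt (ENNReal.natCast_lt_top n)).ne
  have hGmono : Monotone G := by
    intro n m hnm x
    by_cases hx : x ∈ spanningSets μ n
    · have hx' : x ∈ spanningSets μ m := monotone_spanningSets μ hnm hx
      simp only [hGdef, Set.indicator_of_mem, hx, hx']
      exact min_le_min le_rfl (Nat.cast_le.2 hnm)
    · simp [hGdef, hx]
  have hGsup : ∀ x, (⨆ n, G n x) = H x := by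
    intro x
    obtain ⟨N, hN⟩ : ∃ n, x ∈ spanningSets μ n := by
      have h := iUnion_spanningSets μ
      have : x ∈ ⋃ n, spanningSets μ n := h ▸ Set.mem_univ x
      exact Set.mem_iUnion.1 this
    refine le_antisymm (iSup_le fun n => hGle n x) ?_
    have key : ∀ n : ℕ, min (H x) n ≤ ⨆ m, G m x := by
      intro n
      refine le_iSup_of_le (max n N) ?_
      have hx' : x ∈ spanningSets μ (max n N) :=
        monotone_spanningSets μ (le_max_right n N) hN
      simp only [hGdef, Set.indicator_of_mem hx']
      exact min_le_min le_rfl (Nat.cast_le.2 (le_max_left n N))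
    rcases eq_or_ne (H x) ⊤ with h | h
    · have hn : ∀ n : ℕ, (n : ℝ≥0∞) ≤ ⨆ m, G m x := fun n => by simpa [h] using key n
      calc H x = ⊤ := h
        _ = ⨆ n : ℕ, (n : ℝ≥0∞) := ENNReal.iSup_natCast.symm
        _ ≤ ⨆ m, G m x := iSup_le hn
    · obtain ⟨n, hn⟩ := ENNReal.exists_nat_gt h
      have := key n
      rwa [min_eq_left hn.le] at this
  set A : ℕ → ℝ≥0∞ := fun n => ∫⁻ x, G n x ^ p ∂μ with hAdef
  have hAne : ∀ n, A n ≠ ⊤ := by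
    intro n
    have hb : ∀ x, G n x ^ p ≤ (spanningSets μ n).indicator (fun _ => (n : ℝ≥0∞) ^ p) x := by
      intro x
      by_cases hx : x ∈ spanningSets μ n
      · simp only [Set.indicator_of_mem hx]
        exact ENNReal.rpow_le_rpow (hGlen n x) hp0.le
      · have : G n x = 0 := by simp [hGdef, hx]
        simp [this, Set.indicator_of_notMem hx, ENNReal.zero_rpow_of_pos hp0]
    have hle : A n ≤ (n : ℝ≥0∞) ^ p * μ (spanningSets μ n) := by
      calc A n ≤ ∫⁻ x, (spanningSets μ n).indicator (fun _ => (n : ℝ≥0∞) ^ p) x ∂μ :=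
            lintegral_mono hb
        _ = (n : ℝ≥0∞) ^ p * μ (spanningSets μ n) := by
            rw [lintegral_indicator (measurableSet_spanningSets μ n), setLIntegral_const]
    exact ne_top_of_le_ne_top
      (ENNReal.mul_ne_top (ENNReal.rpow_ne_top_of_nonneg hp0.le (ENNReal.natCast_ne_top n))
        (measure_spanningSets_lt_top μ n).ne) hle
  have hq0 : (0 : ℝ) < 1 / q := hpq.symm.one_div_pos
  have hmain : ∀ n, A n ≤ R * A n ^ (1 / q) := by
    intro n
    have hGq : Measurable fun x => G n x ^ (p - 1) := (hGmeas n).pow_const _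
    have step1 : A n ≤ ∫⁻ x, H x * G n x ^ (p - 1) ∂μ := by
      refine lintegral_mono fun x => ?_
      have hsplit : G n x ^ p = G n x * G n x ^ (p - 1) := by
        rcases eq_or_ne (G n x) 0 with h0 | h0
        · rw [h0, ENNReal.zero_rpow_of_pos hp0,
            ENNReal.zero_rpow_of_pos (by linarith : (0:ℝ) < p - 1), zero_mul]
        · calc G n x ^ p = G n x ^ ((1 : ℝ) + (p - 1)) := by ring_nf
            _ = G n x ^ (1 : ℝ) * G n x ^ (p - 1) := ENNReal.rpow_add _ _ h0 (hGne n x)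
            _ = G n x * G n x ^ (p - 1) := by rw [ENNReal.rpow_one]
      rw [hsplit]
      exact mul_le_mul_left (hGle n x) _
    have step2 : ∫⁻ x, H x * G n x ^ (p - 1) ∂μ
        = ∫⁻ y, ∫⁻ x, F x y * G n x ^ (p - 1) ∂μ ∂ν := by
      have h1 : ∀ x, H x * G n x ^ (p - 1) = ∫⁻ y, F x y * G n x ^ (p - 1) ∂ν := fun x =>
        (lintegral_mul_const _ hF.of_uncurry_left).symm
      simp_rw [h1]
      exact lintegral_lintegral_swap ((hF.mul (hGq.comp measurable_fst)).aemeasurable)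
    have step3 : ∀ y, ∫⁻ x, F x y * G n x ^ (p - 1) ∂μ
        ≤ (∫⁻ x, F x y ^ p ∂μ) ^ (1 / p) * A n ^ (1 / q) := by
      intro y
      have hFy : Measurable fun x => F x y := hF.of_uncurry_right
      have h1 := ENNReal.lintegral_mul_le_Lp_mul_Lq μ hpq
        hFy.aemeasurable hGq.aemeasurable
      have h2 : (∫⁻ x, (G n x ^ (p - 1)) ^ q ∂μ) = A n := by
        rw [hAdef]
        congr 1
        funext x
        rw [← ENNReal.rpow_mul, hpq.sub_one_mul_conj]
      rwa [h2] at h1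
    calc A n ≤ ∫⁻ x, H x * G n x ^ (p - 1) ∂μ := step1
      _ = ∫⁻ y, ∫⁻ x, F x y * G n x ^ (p - 1) ∂μ ∂ν := step2
      _ ≤ ∫⁻ y, (∫⁻ x, F x y ^ p ∂μ) ^ (1 / p) * A n ^ (1 / q) ∂ν := lintegral_mono step3
      _ = R * A n ^ (1 / q) :=
          lintegral_mul_const' _ _ (ENNReal.rpow_ne_top_of_nonneg hq0.le (hAne n))
  have hAn_le : ∀ n, A n ^ (1 / p) ≤ R := by
    intro n
    rcases eq_or_ne (A n) 0 with h0 | h0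
    · rw [h0, ENNReal.zero_rpow_of_pos (by positivity)]
      exact zero_le
    · have hAq_ne0 : A n ^ (1 / q) ≠ 0 := by
        simp only [ne_eq, ENNReal.rpow_eq_zero_iff, not_or]
        constructor
        · rintro ⟨h, -⟩; exact h0 h
        · rintro ⟨h, -⟩; exact hAne n h
      have hAq_ne_top : A n ^ (1 / q) ≠ ⊤ :=
        ENNReal.rpow_ne_top_of_nonneg hq0.le (hAne n)
      have hsplit : A n ^ (1 / p) = A n * (A n ^ (1 / q))⁻¹ := by
        have hexp : 1 / p = 1 + -(1 / q) := by
          have := hpq.inv_add_inv_eq_one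
          rw [one_div, one_div]
          linarith
        rw [hexp, ENNReal.rpow_add _ _ h0 (hAne n), ENNReal.rpow_one,
          ENNReal.rpow_neg]
      calc A n ^ (1 / p) = A n * (A n ^ (1 / q))⁻¹ := hsplit
        _ ≤ R * A n ^ (1 / q) * (A n ^ (1 / q))⁻¹ := mul_le_mul_left (hmain n) _
        _ = R * (A n ^ (1 / q) * (A n ^ (1 / q))⁻¹) := by rw [mul_assoc]
        _ = R := by rw [ENNReal.mul_inv_cancel hAq_ne0 hAq_ne_top, mul_one]
  have hsup : ∫⁻ x, H x ^ p ∂μ = ⨆ n, A n := by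
    rw [hAdef, ← lintegral_iSup (fun n => (hGmeas n).pow_const p)
      (fun n m hnm x => ENNReal.rpow_le_rpow (hGmono hnm x) hp0.le)]
    congr 1
    funext x
    rw [← iSup_rpow' hp0, hGsup x]
  rw [hsup, iSup_rpow' (by positivity : (0:ℝ) < 1 / p)]
  exact iSup_le hAn_le

/-- Grand Lebesgue norm bound via the Besov natural function `ψ(p) = ‖f‖_{B^α_p}`:
`sup_{p ∈ (1,β)} ‖D^α f‖_{L^p(0,b)} / ψ(p) ≤ 1/Γ(1-α)`. -/
theorem stmt_15 (α β : ℝ) (hα : α ∈ Set.Ioo (0 : ℝ) 1) (hβ : 1 < β) (hβ2 : β ≤ 1 / α)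
    (b : ℝ≥0∞) (hb : 0 < b) (f : ℝ → ℝ) (hmeas : Measurable f)
    (hf0 : ∀ x : ℝ, x ∉ intervalOf b → f x = 0)
    (hfin : ∀ p ∈ Set.Ioo (1 : ℝ) β, besovNorm α p b f ≠ ⊤) :
    (⨆ p ∈ Set.Ioo (1 : ℝ) β,
        eLpNorm (marchaud α f) (ENNReal.ofReal p) (volume.restrict (intervalOf b)) /
          besovNorm α p b f) ≤
      ENNReal.ofReal (1 / Real.Gamma (1 - α)) := by
  obtain ⟨hα0, hα1⟩ := hα
  set T : Set ℝ := intervalOf b with hTdef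
  have hT : MeasurableSet T := by
    have : T = Set.Ioi 0 ∩ ENNReal.ofReal ⁻¹' Set.Iio b := by
      ext x; simp [hTdef, intervalOf]
    rw [this]
    exact measurableSet_Ioi.inter (ENNReal.measurable_ofReal measurableSet_Iio)
  set μ : Measure ℝ := volume.restrict T with hμdef
  have hΓ : 0 < Real.Gamma (1 - α) := Real.Gamma_pos_of_pos (by linarith)
  have hc0 : 0 < 1 / Real.Gamma (1 - α) := by positivity
  refine iSup₂_le fun p hp => ?_
  obtain ⟨hp1, hpβ⟩ := hp
  set q : ℝ≥0∞ := ENNReal.ofReal p with hqdef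
  have hq1 : 1 ≤ q := by
    rw [hqdef]
    exact ENNReal.one_le_ofReal.2 hp1.le
  have hq0 : q ≠ 0 := by
    intro h
    rw [h] at hq1
    simp at hq1
  have hqtop : q ≠ ∞ := ENNReal.ofReal_ne_top
  have hqc : q.toReal = p := ENNReal.toReal_ofReal (by linarith)
  -- the kernel
  set K : ℝ → ℝ → ℝ :=
    fun x s => (Set.Ioc 0 x).indicator (fun s => (f x - f (x - s)) * s ^ (-1 - α)) s with hKdef
  have hKm : Measurable (Function.uncurry K) := by
    have hset : MeasurableSet {z : ℝ × ℝ | 0 < z.2 ∧ z.2 ≤ z.1} :=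
      (measurableSet_lt measurable_const measurable_snd).inter
        (measurableSet_le measurable_snd measurable_fst)
    have hfun : Measurable fun z : ℝ × ℝ => (f z.1 - f (z.1 - z.2)) * z.2 ^ (-1 - α) := by
      refine (((hmeas.comp measurable_fst).sub
        (hmeas.comp (measurable_fst.sub measurable_snd))).mul ?_)
      fun_prop
    have heq : Function.uncurry K
        = Set.indicator {z : ℝ × ℝ | 0 < z.2 ∧ z.2 ≤ z.1}
          (fun z => (f z.1 - f (z.1 - z.2)) * z.2 ^ (-1 - α)) := by
      funext z
      simp only [Function.uncurry, hKdef, Set.indicator_apply, Set.mem_Ioc, Set.mem_setOf_eq]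
    rw [heq]
    exact hfun.indicator hset
  set J : ℝ → ℝ := fun x => ∫ s in T, K x s with hJdef
  have hJm : Measurable J := by
    have : StronglyMeasurable (Function.uncurry K) := hKm.stronglyMeasurable
    exact (this.integral_prod_right').measurable
  -- pointwise identity on T
  have hIJ : ∀ x ∈ T, (∫ t in (0:ℝ)..x, (f x - f t) * (x - t) ^ (-1 - α)) = J x := by
    rintro x ⟨hx0, hxb⟩
    have h1 : (∫ t in (0:ℝ)..x, (f x - f t) * (x - t) ^ (-1 - α))
        = ∫ s in (0:ℝ)..x, (f x - f (x - s)) * s ^ (-1 - α) := by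
      have h := intervalIntegral.integral_comp_sub_left (a := (0:ℝ)) (b := x)
        (fun t => (f x - f t) * (x - t) ^ (-1 - α)) x
      rw [sub_self, sub_zero] at h
      rw [← h]
      refine intervalIntegral.integral_congr fun s hs => ?_
      rw [sub_sub_self]
    have h2 : (∫ s in (0:ℝ)..x, (f x - f (x - s)) * s ^ (-1 - α))
        = ∫ s in Set.Ioc 0 x, (f x - f (x - s)) * s ^ (-1 - α) :=
      intervalIntegral.integral_of_le hx0.le
    have hsub : Set.Ioc 0 x ⊆ T := fun s hs =>
      ⟨hs.1, lt_of_le_of_lt (ENNReal.ofReal_le_ofReal hs.2) hxb⟩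
    have h3 : J x = ∫ s in Set.Ioc 0 x, (f x - f (x - s)) * s ^ (-1 - α) := by
      rw [hJdef]
      simp only [hKdef]
      rw [setIntegral_indicator measurableSet_Ioc, Set.inter_eq_self_of_subset_right hsub]
    rw [h1, h2, h3]
  -- conjugate exponent
  have hpq : p.HolderConjugate (p / (p - 1)) :=
    Real.HolderConjugate.conjExponent hp1
  -- per-s bound
  have hper : ∀ s ∈ T, eLpNorm (fun x => K x s) q μ
      ≤ ENNReal.ofReal (s ^ (-1 - α)) * modulusLp q f s := by
    rintro s ⟨hs0, -⟩
    have hKs : (fun x => K x s)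
        = Set.indicator {x : ℝ | s ≤ x} (fun x => (f x - f (x - s)) * s ^ (-1 - α)) := by
      funext x
      simp only [hKdef, Set.indicator_apply, Set.mem_Ioc, Set.mem_setOf_eq]
      by_cases hx : s ≤ x
      · simp [hx, hs0]
      · simp [hx]
    rw [hKs]
    have hsmul : Set.indicator {x : ℝ | s ≤ x} (fun x => (f x - f (x - s)) * s ^ (-1 - α))
        = Set.indicator {x : ℝ | s ≤ x} ((s ^ (-1 - α)) • (fun x => f x - f (x - s))) := by
      funext x
      simp [Set.indicator_apply, mul_comm, smul_eq_mul]
    rw [hsmul]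
    calc eLpNorm (Set.indicator {x : ℝ | s ≤ x}
          ((s ^ (-1 - α)) • (fun x => f x - f (x - s)))) q μ
        ≤ eLpNorm ((s ^ (-1 - α)) • (fun x => f x - f (x - s))) q μ :=
          eLpNorm_indicator_le _
      _ ≤ eLpNorm ((s ^ (-1 - α)) • (fun x => f x - f (x - s))) q volume :=
          eLpNorm_mono_measure _ Measure.restrict_le_self
      _ = ENNReal.ofReal (s ^ (-1 - α)) * eLpNorm (fun x => f x - f (x - s)) q volume := by
          rw [eLpNorm_const_smul, Real.enorm_eq_ofReal (Real.rpow_nonneg hs0.le _)]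
      _ = ENNReal.ofReal (s ^ (-1 - α))
            * eLpNorm (fun x => f (x + (-s)) - f x) q volume := by
          congr 1
          have hneg : (fun x => f (x + (-s)) - f x) = -(fun x => f x - f (x - s)) := by
            funext x
            simp only [Pi.neg_apply, neg_sub]
            rw [← sub_eq_add_neg]
          rw [hneg, eLpNorm_neg]
      _ ≤ ENNReal.ofReal (s ^ (-1 - α)) * modulusLp q f s := by
          refine mul_le_mul_right ?_ _
          exact le_biSup (fun h => eLpNorm (fun x => f (x + h) - f x) q volume)
            (⟨le_rfl, by linarith⟩ : -s ∈ Set.Icc (-s) s)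
  -- the main bound for J
  have hJbound : eLpNorm J q μ
      ≤ ∫⁻ t in T, ENNReal.ofReal (t ^ (-1 - α)) * modulusLp q f t := by
    have hFm : Measurable (Function.uncurry fun x s => (‖K x s‖₊ : ℝ≥0∞)) := hKm.enorm
    have hnorm : ∀ x, (‖J x‖₊ : ℝ≥0∞) ≤ ∫⁻ s in T, (‖K x s‖₊ : ℝ≥0∞) :=
      fun x => enorm_integral_le_lintegral_enorm _
    have hp0 : (0:ℝ) < p := by linarith
    calc eLpNorm J q μ
        = (∫⁻ x, (‖J x‖₊ : ℝ≥0∞) ^ p ∂μ) ^ (1 / p) := by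
          rw [eLpNorm_eq_lintegral_rpow_enorm_toReal hq0 hqtop, hqc]; rfl
      _ ≤ (∫⁻ x, (∫⁻ s in T, (‖K x s‖₊ : ℝ≥0∞)) ^ p ∂μ) ^ (1 / p) := by
          refine ENNReal.rpow_le_rpow ?_ (by positivity)
          exact lintegral_mono fun x => ENNReal.rpow_le_rpow (hnorm x) hp0.le
      _ ≤ ∫⁻ s in T, (∫⁻ x, (‖K x s‖₊ : ℝ≥0∞) ^ p ∂μ) ^ (1 / p) :=
          minkowski_lintegral hpq hFm
      _ = ∫⁻ s in T, eLpNorm (fun x => K x s) q μ := by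
          refine lintegral_congr fun s => ?_
          rw [eLpNorm_eq_lintegral_rpow_enorm_toReal hq0 hqtop, hqc]; rfl
      _ ≤ ∫⁻ t in T, ENNReal.ofReal (t ^ (-1 - α)) * modulusLp q f t :=
          lintegral_mono_ae ((ae_restrict_iff' hT).2 (ae_of_all _ hper))
  -- combine
  have key : eLpNorm (marchaud α f) q μ
      ≤ ENNReal.ofReal (1 / Real.Gamma (1 - α)) * besovNorm α p b f := by
    have hmar : marchaud α f = (1 / Real.Gamma (1 - α)) •
        fun x => x ^ (-α) * f x
          + α * ∫ t in (0:ℝ)..x, (f x - f t) * (x - t) ^ (-1 - α) := by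
      funext x
      simp [marchaud, smul_eq_mul]
    rw [hmar, eLpNorm_const_smul, Real.enorm_eq_ofReal hc0.le]
    refine mul_le_mul_right ?_ _
    have hcongr : (fun x => x ^ (-α) * f x
          + α * ∫ t in (0:ℝ)..x, (f x - f t) * (x - t) ^ (-1 - α))
        =ᵐ[μ] (fun x => x ^ (-α) * f x + α * J x) := by
      refine (ae_restrict_iff' hT).2 (ae_of_all _ fun x hx => ?_)
      dsimp only
      rw [hIJ x hx]
    rw [eLpNorm_congr_ae hcongr]
    have h1m : AEStronglyMeasurable (fun x : ℝ => x ^ (-α) * f x) μ := by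
      refine Measurable.aestronglyMeasurable ?_
      exact (by fun_prop : Measurable fun x : ℝ => x ^ (-α)).mul hmeas
    have h2m : AEStronglyMeasurable (fun x => α * J x) μ :=
      (hJm.const_mul α).aestronglyMeasurable
    have htri : eLpNorm (fun x => x ^ (-α) * f x + α * J x) q μ
        ≤ eLpNorm (fun x : ℝ => x ^ (-α) * f x) q μ + eLpNorm (fun x => α * J x) q μ :=
      eLpNorm_add_le h1m h2m hq1
    have hsecond : eLpNorm (fun x => α * J x) q μ
        ≤ ENNReal.ofReal α * ∫⁻ t in T, ENNReal.ofReal (t ^ (-1 - α)) * modulusLp q f t := by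
      have : (fun x => α * J x) = α • J := by funext x; simp [smul_eq_mul]
      rw [this, eLpNorm_const_smul, Real.enorm_eq_ofReal hα0.le]
      exact mul_le_mul_right hJbound _
    refine htri.trans ?_
    rw [besovNorm]
    exact add_le_add le_rfl hsecond
  exact ENNReal.div_le_of_le_mul key
end
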